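/- arXiv:1905.01696 — 3 statements merged into one kernel-verified Lean document; each statement's English description precedes it below -/
import Mathlib

section
/- Let ω = Σ_{j=1}^m λ_j δ_{x_j} be a nonnegative linear combination of Dirac measures at distinct points x_j with λ_j > 0, and let I_j = v_j v_jᵀ where v_j = ∂S(x_j) ∈ ℝⁿ. If the symmetric matrices {I_j}_{j=1}^m are linearly dependent, then there exist nonnegative coefficients λ̃_j with λ̃_{j₀} = 0 for at least one index j₀, Σ_j λ̃_j I_j = Σ_j λ_j I_j, and Σ_j λ̃_j ≤ Σ_j λ_j. -/
lemma sparser_aux {n m : ℕ} (v : Fin m → Fin n → ℝ)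
    (lam : Fin m → ℝ) (hlam : ∀ j, 0 < lam j) (c : Fin m → ℝ)
    (hc : ∑ j, c j • Matrix.vecMulVec (v j) (v j) = 0)
    (hsum : 0 ≤ ∑ j, c j) (j₁ : Fin m) (hj₁ : 0 < c j₁) :
    ∃ lam' : Fin m → ℝ, (∀ j, 0 ≤ lam' j) ∧ (∃ j₀, lam' j₀ = 0) ∧
      (∑ j, lam' j • Matrix.vecMulVec (v j) (v j)
        = ∑ j, lam j • Matrix.vecMulVec (v j) (v j)) ∧
      (∑ j, lam' j ≤ ∑ j, lam j) := by
  classical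
  set S := Finset.univ.filter (fun j => 0 < c j) with hS
  have hSne : S.Nonempty := ⟨j₁, by simp [hS, hj₁]⟩
  obtain ⟨j₀, hj₀S, hmin⟩ := S.exists_min_image (fun j => lam j / c j) hSne
  have hcj₀ : 0 < c j₀ := by simpa [hS] using hj₀S
  set t := lam j₀ / c j₀ with ht
  have ht0 : 0 < t := div_pos (hlam j₀) hcj₀
  refine ⟨fun j => lam j - t * c j, ?_, ⟨j₀, ?_⟩, ?_, ?_⟩
  · intro j
    show (0:ℝ) ≤ lam j - t * c j
    by_cases h : 0 < c j
    · have h1 : t ≤ lam j / c j := hmin j (by simp [hS, h])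
      have h2 : t * c j ≤ lam j := (le_div_iff₀ h).mp h1
      linarith
    · push_neg at h
      have : t * c j ≤ 0 := mul_nonpos_of_nonneg_of_nonpos ht0.le h
      have := hlam j
      linarith
  · simp only [ht]
    field_simp
    ring
  · have key : ∑ j, (lam j - t * c j) • Matrix.vecMulVec (v j) (v j)
        = ∑ j, lam j • Matrix.vecMulVec (v j) (v j)
          - t • ∑ j, c j • Matrix.vecMulVec (v j) (v j) := by
      rw [Finset.smul_sum, ← Finset.sum_sub_distrib]
      refine Finset.sum_congr rfl fun j _ => ?_
      rw [sub_smul, smul_smul]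
    simp only
    rw [key, hc, smul_zero, sub_zero]
  · simp only
    rw [Finset.sum_sub_distrib, ← Finset.mul_sum]
    nlinarith [mul_nonneg ht0.le hsum]

/-- Sparsification step: if the rank-one matrices `vⱼvⱼᵀ` are linearly
dependent, the weights `λⱼ > 0` can be replaced by nonnegative weights with at
least one zero, preserving the weighted sum and not increasing the total weight. -/
theorem exists_sparser_weights {n m : ℕ} (v : Fin m → Fin n → ℝ)
    (lam : Fin m → ℝ) (hlam : ∀ j, 0 < lam j)
    (hdep : ¬ LinearIndependent ℝ (fun j : Fin m => Matrix.vecMulVec (v j) (v j))) :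
    ∃ lam' : Fin m → ℝ, (∀ j, 0 ≤ lam' j) ∧ (∃ j₀, lam' j₀ = 0) ∧
      (∑ j, lam' j • Matrix.vecMulVec (v j) (v j)
        = ∑ j, lam j • Matrix.vecMulVec (v j) (v j)) ∧
      (∑ j, lam' j ≤ ∑ j, lam j) := by
  obtain ⟨c, hc0, i, hci⟩ := Fintype.not_linearIndependent_iff.mp hdep
  by_cases hs : 0 ≤ ∑ j, c j
  · by_cases hp : ∃ j, 0 < c j
    · obtain ⟨j₁, hj₁⟩ := hp
      exact sparser_aux v lam hlam c hc0 hs j₁ hj₁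
    · push_neg at hp
      have hz : ∑ j, c j = 0 :=
        le_antisymm (Finset.sum_nonpos fun j _ => hp j) hs
      have : ∀ j ∈ Finset.univ, c j = 0 :=
        (Finset.sum_eq_zero_iff_of_nonpos fun j _ => hp j).mp hz
      exact absurd (this i (Finset.mem_univ i)) hci
  · push_neg at hs
    have hc0' : ∑ j, (-c) j • Matrix.vecMulVec (v j) (v j) = 0 := by
      simp only [Pi.neg_apply, neg_smul, Finset.sum_neg_distrib, hc0, neg_zero]
    have hs' : 0 ≤ ∑ j, (-c) j := by
      simp only [Pi.neg_apply, Finset.sum_neg_distrib]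
      linarith
    by_cases hp : ∃ j, 0 < (-c) j
    · obtain ⟨j₁, hj₁⟩ := hp
      exact sparser_aux v lam hlam (-c) hc0' hs' j₁ hj₁
    · push_neg at hp
      have hz : ∑ j, (-c) j = 0 :=
        le_antisymm (Finset.sum_nonpos fun j _ => hp j) hs'
      simp only [Pi.neg_apply, Finset.sum_neg_distrib, neg_eq_zero] at hz
      linarith
end

section
/- For any finite nonnegative combination Σ_{j=1}^m λ_j v_j v_jᵀ of rank-one symmetric matrices (v_j ∈ ℝⁿ, λ_j ≥ 0), there exists a subset J ⊆ {1,…,m} with |J| ≤ n(n+1)/2 and coefficients λ̃_j ≥ 0 for j ∈ J such that Σ_{j∈J} λ̃_j v_j v_jᵀ = Σ_j λ_j v_j v_jᵀ and Σ_{j∈J} λ̃_j ≤ Σ_j λ_j. -/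
open Finset

noncomputable def truncMap (n : ℕ) : Matrix (Fin n) (Fin n) ℝ →ₗ[ℝ] ({p : Fin n × Fin n // p.1 ≤ p.2} → ℝ) :=
  { toFun := fun A p => A p.1.1 p.1.2
    map_add' := fun _ _ => rfl
    map_smul' := fun _ _ => rfl }

lemma truncMap_inj {n : ℕ} {A : Matrix (Fin n) (Fin n) ℝ} (hA : A.IsSymm)
    (h : truncMap n A = 0) : A = 0 := by
  ext i j
  rcases le_total i j with hij | hij
  · exact congrFun h ⟨(i, j), hij⟩
  · have := congrFun h ⟨(j, i), hij⟩
    simpa using (hA.apply i j).symm.trans this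

lemma exists_dep {n m : ℕ} (s : Finset (Fin m)) (w : Fin m → Matrix (Fin n) (Fin n) ℝ)
    (hsym : ∀ j, (w j).IsSymm) (hcard : n * (n+1)/2 < s.card) :
    ∃ μ : Fin m → ℝ, (∀ j ∉ s, μ j = 0) ∧ (∃ j ∈ s, μ j ≠ 0) ∧
      ∑ j ∈ s, μ j • w j = 0 := by
  have hcardsub : Fintype.card {p : Fin n × Fin n // p.1 ≤ p.2} = n * (n+1) / 2 := by
    have e : {p : Fin n × Fin n // p.1 ≤ p.2} ≃ (Σ i : Fin n, {j : Fin n // i ≤ j}) :=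
      { toFun := fun p => ⟨p.1.1, p.1.2, p.2⟩
        invFun := fun x => ⟨(x.1, x.2.1), x.2.2⟩
        left_inv := fun _ => rfl
        right_inv := fun _ => rfl }
    rw [Fintype.card_congr e, Fintype.card_sigma]
    have h1 : ∀ i : Fin n, Fintype.card {j : Fin n // i ≤ j} = n - i := by
      intro i
      rw [Fintype.card_subtype]
      have : Finset.filter (fun j => i ≤ j) Finset.univ = Finset.Ici i := by
        ext j; simp
      rw [this, Fin.card_Ici]
    simp only [h1]
    rw [Fin.sum_univ_eq_sum_range]
    have h1 := Finset.sum_range_reflect (fun i => i + 1) n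
    have h2 : ∑ j ∈ Finset.range n, (n - 1 - j + 1) = ∑ i ∈ Finset.range n, (n - i) := by
      apply Finset.sum_congr rfl
      intro j hj; rw [Finset.mem_range] at hj; omega
    have h3 : ∑ j ∈ Finset.range n, (j + 1) = ∑ i ∈ Finset.range (n+1), i := by
      rw [Finset.sum_range_succ']; simp
    have h4 := Finset.sum_range_id_mul_two (n+1)
    have h5 : (∑ i ∈ Finset.range (n+1), i) * 2 = n * (n+1) := by
      rw [h4, Nat.add_sub_cancel]; ring
    omega
  have hnotli : ¬ LinearIndependent ℝ (fun j : s => truncMap n (w j)) := by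
    intro hli
    have h := hli.fintype_card_le_finrank
    rw [Module.finrank_pi, hcardsub, Fintype.card_coe] at h
    omega
  rw [Fintype.not_linearIndependent_iff] at hnotli
  obtain ⟨g, hg0, i, hi⟩ := hnotli
  refine ⟨fun j => if h : j ∈ s then g ⟨j, h⟩ else 0, fun j hj => by simp [hj], ⟨i, i.2, by simp [hi]⟩, ?_⟩
  have hS : ∑ j ∈ s, (fun j => if h : j ∈ s then g ⟨j, h⟩ else 0) j • w j
      = ∑ j : s, g j • w j := by
    rw [← Finset.sum_attach s fun j => (if h : j ∈ s then g ⟨j, h⟩ else 0) • w j]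
    apply Finset.sum_congr rfl
    intro j _; simp [j.2]
  rw [hS]
  have hsymS : (∑ j : s, g j • w j).IsSymm := by
    rw [Matrix.IsSymm, Matrix.transpose_sum]
    exact Finset.sum_congr rfl fun j _ => by rw [Matrix.transpose_smul, (hsym j)]
  apply truncMap_inj hsymS
  rw [map_sum]
  simpa using hg0

lemma aux_sparse {n m : ℕ} (v : Fin m → Fin n → ℝ) :
    ∀ (k : ℕ) (lam : Fin m → ℝ), (∀ j, 0 ≤ lam j) →
      (Finset.univ.filter fun j => lam j ≠ 0).card ≤ k →
      ∃ (J : Finset (Fin m)) (lam' : Fin m → ℝ),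
        J.card ≤ n * (n + 1) / 2 ∧ (∀ j, 0 ≤ lam' j) ∧
        (∑ j ∈ J, lam' j • Matrix.vecMulVec (v j) (v j)
          = ∑ j, lam j • Matrix.vecMulVec (v j) (v j)) ∧
        (∑ j ∈ J, lam' j ≤ ∑ j, lam j) := by
  intro k
  induction k with
  | zero =>
    intro lam hlam hcard
    -- support empty: all lam j = 0
    have hall : ∀ j, lam j = 0 := by
      intro j
      by_contra hj
      have : j ∈ Finset.univ.filter fun j => lam j ≠ 0 := by simp [hj]
      have := Finset.card_pos.mpr ⟨j, this⟩
      omega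
    refine ⟨∅, fun _ => 0, by simp, by simp, by simp [hall], by
      simp; exact Finset.sum_nonneg fun j _ => hlam j⟩
  | succ k ih =>
    intro lam hlam hcard
    set s := Finset.univ.filter fun j => lam j ≠ 0 with hs
    by_cases hsmall : s.card ≤ n * (n+1)/2
    · refine ⟨s, lam, hsmall, hlam, ?_, ?_⟩
      · apply Finset.sum_subset (Finset.subset_univ _)
        intro j _ hj
        have : lam j = 0 := by by_contra h; exact hj (by simp [hs, h])
        simp [this]
      · apply le_of_eq
        apply Finset.sum_subset (Finset.subset_univ _)
        intro j _ hj
        by_contra h; exact hj (by simp [hs, h])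
    · push_neg at hsmall
      set w := fun j => Matrix.vecMulVec (v j) (v j) with hw
      have hsym : ∀ j, (w j).IsSymm := by
        intro j; rw [Matrix.IsSymm]; ext a b; simp [hw, Matrix.vecMulVec, mul_comm]
      obtain ⟨μ, hμ0, ⟨j₁, hj₁s, hj₁⟩, hμsum⟩ := exists_dep s w hsym hsmall
      -- extend the relation to univ
      have hμuniv : ∑ j, μ j • w j = 0 := by
        rw [← Finset.sum_subset (Finset.subset_univ s)]
        · exact hμsum
        · intro j _ hj; rw [hμ0 j hj, zero_smul]
      -- choose sign
      obtain ⟨ν, hν0, hνex, hνuniv, hνsumnn⟩ :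
          ∃ ν : Fin m → ℝ, (∀ j ∉ s, ν j = 0) ∧ (∃ j ∈ s, ν j ≠ 0) ∧
            (∑ j, ν j • w j = 0) ∧ 0 ≤ ∑ j, ν j := by
        rcases le_total 0 (∑ j, μ j) with h | h
        · exact ⟨μ, hμ0, ⟨j₁, hj₁s, hj₁⟩, hμuniv, h⟩
        · refine ⟨fun j => -μ j, fun j hj => by simp [hμ0 j hj],
            ⟨j₁, hj₁s, by simpa using hj₁⟩, ?_, ?_⟩
          · simp only [neg_smul, Finset.sum_neg_distrib, hμuniv, neg_zero]
          · simp only [Finset.sum_neg_distrib]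
            linarith
      -- there is a positive coefficient
      have hpos : ∃ j ∈ s, 0 < ν j := by
        by_contra hc
        push_neg at hc
        have hsum0 : ∑ j ∈ s, ν j = 0 := by
          have h1 : ∑ j ∈ s, ν j = ∑ j, ν j := by
            apply Finset.sum_subset (Finset.subset_univ _)
            intro j _ hj; exact hν0 j hj
          have h2 : ∑ j ∈ s, ν j ≤ 0 := Finset.sum_nonpos hc
          linarith [h1 ▸ hνsumnn]
        obtain ⟨j₂, hj₂s, hj₂⟩ := hνex
        have := (Finset.sum_eq_zero_iff_of_nonpos hc).mp hsum0 j₂ hj₂s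
        exact hj₂ this
      set s' := s.filter (fun j => 0 < ν j) with hs'
      have hs'ne : s'.Nonempty := by
        obtain ⟨j₂, h1, h2⟩ := hpos
        exact ⟨j₂, by simp [hs', h1, h2]⟩
      obtain ⟨j₀, hj₀, hj₀min⟩ := Finset.exists_min_image s' (fun j => lam j / ν j) hs'ne
      have hj₀s : j₀ ∈ s := (Finset.mem_filter.mp hj₀).1
      have hνj₀ : 0 < ν j₀ := (Finset.mem_filter.mp hj₀).2
      set t := lam j₀ / ν j₀ with ht
      have htnn : 0 ≤ t := div_nonneg (hlam j₀) hνj₀.le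
      set lam₂ := fun j => lam j - t * ν j with hlam₂
      have hlam₂nn : ∀ j, 0 ≤ lam₂ j := by
        intro j
        rcases le_or_gt (ν j) 0 with h | h
        · have : t * ν j ≤ 0 := mul_nonpos_of_nonneg_of_nonpos htnn h
          simp only [hlam₂]; linarith [hlam j]
        · have hjs : j ∈ s := by
            by_contra hjs
            exact absurd (hν0 j hjs) h.ne'
          have hjs' : j ∈ s' := Finset.mem_filter.mpr ⟨hjs, h⟩
          have := hj₀min j hjs'
          have : t * ν j ≤ lam j := by
            rw [ht]
            calc lam j₀ / ν j₀ * ν j ≤ lam j / ν j * ν j := by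
                  apply mul_le_mul_of_nonneg_right (hj₀min j hjs') h.le
              _ = lam j := by field_simp
          simp only [hlam₂]; linarith
      have hlam₂j₀ : lam₂ j₀ = 0 := by
        simp only [hlam₂, ht]
        field_simp
        simp
      have hsupp₂ : (Finset.univ.filter fun j => lam₂ j ≠ 0) ⊆ s.erase j₀ := by
        intro j hj
        rw [Finset.mem_filter] at hj
        rw [Finset.mem_erase]
        constructor
        · rintro rfl; exact hj.2 hlam₂j₀
        · by_contra hjs
          have h1 := hν0 j hjs
          have h2 : lam j = 0 := by by_contra h; exact hjs (by simp [hs, h])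
          exact hj.2 (by simp [hlam₂, h1, h2])
      have hcard₂ : (Finset.univ.filter fun j => lam₂ j ≠ 0).card ≤ k := by
        have h1 := Finset.card_le_card hsupp₂
        have h2 : (s.erase j₀).card = s.card - 1 := Finset.card_erase_of_mem hj₀s
        have h3 : s.card ≤ k + 1 := hcard
        have h4 : 0 < s.card := Finset.card_pos.mpr ⟨j₀, hj₀s⟩
        omega
      obtain ⟨J, lam', hJcard, hlam'nn, hJsum, hJcost⟩ := ih lam₂ hlam₂nn hcard₂
      refine ⟨J, lam', hJcard, hlam'nn, ?_, ?_⟩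
      · rw [hJsum]
        have : ∑ j, lam₂ j • w j = ∑ j, lam j • w j - t • ∑ j, ν j • w j := by
          rw [Finset.smul_sum, ← Finset.sum_sub_distrib]
          apply Finset.sum_congr rfl
          intro j _
          rw [smul_smul, ← sub_smul]
        rw [this, hνuniv, smul_zero, sub_zero]
      · refine hJcost.trans ?_
        have h1 : ∑ j, lam₂ j = ∑ j, lam j - t * ∑ j, ν j := by
          rw [Finset.mul_sum, ← Finset.sum_sub_distrib]
        have h2 : 0 ≤ t * ∑ j, ν j := mul_nonneg htnn hνsumnn
        linarith

/-- Carathéodory-type sparsification with cost control: every nonnegative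
combination of rank-one symmetric matrices can be represented using at most
`n(n+1)/2` of them with no larger total weight. -/
theorem exists_sparse_representation {n m : ℕ} (v : Fin m → Fin n → ℝ)
    (lam : Fin m → ℝ) (hlam : ∀ j, 0 ≤ lam j) :
    ∃ (J : Finset (Fin m)) (lam' : Fin m → ℝ),
      J.card ≤ n * (n + 1) / 2 ∧ (∀ j, 0 ≤ lam' j) ∧
      (∑ j ∈ J, lam' j • Matrix.vecMulVec (v j) (v j)
        = ∑ j, lam j • Matrix.vecMulVec (v j) (v j)) ∧
      (∑ j ∈ J, lam' j ≤ ∑ j, lam j) := by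
  exact aux_sparse v _ lam hlam le_rfl
end

section
/- Let ψ' be a continuous function on a compact metric space Ω₀ with ψ' ≤ 0, and β > 0. A finite positive Borel measure ω̄ satisfies ⟨−ψ', ω − ω̄⟩ + β‖ω̄‖ ≤ β‖ω‖ for all finite positive measures ω if and only if −ψ'(x) ≤ β for all x ∈ Ω₀ and supp ω̄ ⊆ {x ∈ Ω₀ : −ψ'(x) = β}. -/
open MeasureTheory

/-- The support of a Borel measure: points all of whose open neighborhoods have
positive measure. -/
def measureSupport {Ω : Type*} [TopologicalSpace Ω] [MeasurableSpace Ω]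
    (ω : Measure Ω) : Set Ω :=
  {x | ∀ s : Set Ω, IsOpen s → x ∈ s → 0 < ω s}

lemma measure_compl_measureSupport {Ω : Type*} [TopologicalSpace Ω]
    [SecondCountableTopology Ω] [MeasurableSpace Ω] [OpensMeasurableSpace Ω]
    (μ : Measure Ω) : μ (measureSupport μ)ᶜ = 0 := by
  set S : Set (Set Ω) := {s | IsOpen s ∧ μ s = 0} with hS
  obtain ⟨T, hTc, hTS, hTU⟩ := TopologicalSpace.isOpen_sUnion_countable S (fun s hs => hs.1)
  have hT0 : μ (⋃₀ T) = 0 := (measure_sUnion_null_iff hTc).2 fun s hs => (hTS hs).2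
  refine measure_mono_null ?_ (hTU ▸ hT0)
  intro x hx
  simp only [measureSupport, Set.mem_compl_iff, Set.mem_setOf_eq, not_forall] at hx
  obtain ⟨s, hso, hxs, hs0⟩ := hx
  exact ⟨s, ⟨hso, le_antisymm (not_lt.mp hs0) zero_le⟩, hxs⟩


/-- First-order optimality condition for the sparse design problem: the
variational inequality holds iff `-ψ' ≤ β` everywhere and the support of `ω̄`
is contained in the set where `-ψ' = β`. -/
theorem optimality_condition {Ω : Type*} [MetricSpace Ω] [CompactSpace Ω]
    [MeasurableSpace Ω] [BorelSpace Ω]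
    (ψ' : Ω → ℝ) (hc : Continuous ψ') (hnp : ∀ x, ψ' x ≤ 0)
    (β : ℝ) (hβ : 0 < β)
    (ωbar : Measure Ω) [IsFiniteMeasure ωbar] :
    (∀ ω : Measure Ω, IsFiniteMeasure ω →
        ((∫ x, -ψ' x ∂ω) - (∫ x, -ψ' x ∂ωbar)) + β * (ωbar Set.univ).toReal
          ≤ β * (ω Set.univ).toReal)
      ↔ ((∀ x, -ψ' x ≤ β) ∧ measureSupport ωbar ⊆ {x | -ψ' x = β}) := by
  have hcont : Continuous fun x => -ψ' x := hc.neg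
  have hint : ∀ (μ : Measure Ω) [IsFiniteMeasure μ], Integrable (fun x => -ψ' x) μ := by
    intro μ _
    exact (integrableOn_univ.mp ((hcont.continuousOn).integrableOn_compact isCompact_univ))
  have hψint : Integrable ψ' ωbar :=
    integrableOn_univ.mp ((hc.continuousOn).integrableOn_compact isCompact_univ)
  constructor
  · intro h
    have hle : ∀ x, -ψ' x ≤ β := by
      intro x
      have hD : IsFiniteMeasure (ωbar + Measure.dirac x) := inferInstance
      have hh := h (ωbar + Measure.dirac x) hD
      rw [integral_add_measure (hint ωbar) (hint (Measure.dirac x)),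
        integral_dirac (fun x => -ψ' x) x] at hh
      have huniv : (ωbar + Measure.dirac x) Set.univ = ωbar Set.univ + 1 := by
        simp [Measure.add_apply]
      rw [huniv, ENNReal.toReal_add (measure_ne_top _ _) ENNReal.one_ne_top,
        ENNReal.toReal_one] at hh
      nlinarith [hh]
    refine ⟨hle, ?_⟩
    have h0 := h 0 inferInstance
    simp only [integral_zero_measure, Measure.coe_zero, Pi.zero_apply, ENNReal.toReal_zero,
      mul_zero, zero_sub] at h0
    have hg0 : ∀ x, 0 ≤ β + ψ' x := fun x => by have := hle x; linarith
    have hgint : Integrable (fun x => β + ψ' x) ωbar := (integrable_const β).add hψint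
    have hneg : ∫ x, -ψ' x ∂ωbar = -∫ x, ψ' x ∂ωbar := integral_neg _
    have hsplit : ∫ x, (β + ψ' x) ∂ωbar
        = β * (ωbar Set.univ).toReal + ∫ x, ψ' x ∂ωbar := by
      rw [integral_add (integrable_const β) hψint, integral_const, smul_eq_mul, mul_comm]; rfl
    have hzero : ∫ x, (β + ψ' x) ∂ωbar = 0 :=
      le_antisymm (by rw [hsplit]; linarith) (integral_nonneg hg0)
    have hae : (fun x => β + ψ' x) =ᵐ[ωbar] 0 :=
      (integral_eq_zero_iff_of_nonneg hg0 hgint).mp hzero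
    have hnull : ωbar {x | β + ψ' x ≠ 0} = 0 := by
      have := hae
      rw [Filter.EventuallyEq, ae_iff] at this
      simpa using this
    intro x hx
    by_contra hne
    have hgx : 0 < β + ψ' x := by
      rcases lt_or_eq_of_le (hg0 x) with h' | h'
      · exact h'
      · exact absurd (show -ψ' x = β by linarith) hne
    have hso : IsOpen {y | (β + ψ' x) / 2 < β + ψ' y} :=
      isOpen_lt continuous_const (continuous_const.add hc)
    have hxs : x ∈ {y | (β + ψ' x) / 2 < β + ψ' y} := by
      simp only [Set.mem_setOf_eq]; linarith
    have hsub : {y | (β + ψ' x) / 2 < β + ψ' y} ⊆ {y | β + ψ' y ≠ 0} := by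
      intro y hy
      simp only [Set.mem_setOf_eq] at hy ⊢
      intro hy0; rw [hy0] at hy; linarith
    have hz : ωbar {y | (β + ψ' x) / 2 < β + ψ' y} = 0 := measure_mono_null hsub hnull
    exact absurd (hx _ hso hxs) (by simp [hz])
  · rintro ⟨hle, hsupp⟩ ω hω
    have h1 : ∫ x, -ψ' x ∂ω ≤ β * (ω Set.univ).toReal := by
      calc ∫ x, -ψ' x ∂ω ≤ ∫ _, β ∂ω := integral_mono (hint ω) (integrable_const β) hle
        _ = β * (ω Set.univ).toReal := by rw [integral_const, smul_eq_mul, mul_comm]; rfl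
    have hnull : ωbar {x | -ψ' x ≠ β} = 0 := by
      refine measure_mono_null ?_ (measure_compl_measureSupport ωbar)
      intro x hx hxsupp
      exact hx (hsupp hxsupp)
    have hae : (fun x => -ψ' x) =ᵐ[ωbar] fun _ => β := by
      rw [Filter.EventuallyEq, ae_iff]
      simpa using hnull
    have h2 : ∫ x, -ψ' x ∂ωbar = β * (ωbar Set.univ).toReal := by
      rw [integral_congr_ae hae, integral_const, smul_eq_mul, mul_comm]; rfl
    linarith
end
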